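/- Let n ≥ 1 and define f : ℤ → ℤ on {1,…,2n} by f(1) = n+1, f(2) = n+2, and f(2s−1) = n+2s, f(2s) = n+2s−1 for 2 ≤ s ≤ n, extended to ℤ by f(i+2n) = f(i)+2n. Then f is a ρ-symmetric bounded affine permutation of type (n,2n); exactly two indices i ∈ {1,…,2n} satisfy f(i) = i+n; the alignments (i,j) of f with 1 ≤ i ≤ 2n are exactly the pairs (2s−1, 2s) for 2 ≤ s ≤ n, each of which is fixed by the mirror map; and consequently σℓ(f) = n−1. -/

import Mathlib

/-- The set of alignments `(i,j)` of `f` with `1 ≤ i ≤ 2n`: pairs with `i < j ≤ f j < f i`. -/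
def alignSet (n : ℕ) (f : ℤ → ℤ) : Set (ℤ × ℤ) :=
  {p | 1 ≤ p.1 ∧ p.1 ≤ 2 * (n : ℤ) ∧ p.1 < p.2 ∧ p.2 ≤ f p.2 ∧ f p.2 < f p.1}

/-- The mirror map on alignments of a ρ-symmetric `f`: `(i,j)` is sent to the pair obtained
from `(f j + n, f i + n)` by adding to both coordinates the unique multiple of `2n`
placing the first coordinate in `{1, …, 2n}`. -/
def mirror (n : ℕ) (f : ℤ → ℤ) (p : ℤ × ℤ) : ℤ × ℤ :=
  ((f p.2 + (n : ℤ) - 1) % (2 * (n : ℤ)) + 1,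
   f p.1 + (n : ℤ) + (((f p.2 + (n : ℤ) - 1) % (2 * (n : ℤ)) + 1) - (f p.2 + (n : ℤ))))

/-- `σℓ(f)`: the number of orbits of the mirror involution on the alignments of `f`;
a pair of distinct mirrored alignments counts once and each self-mirror alignment
counts once, so it equals `(#alignments + #self-mirror alignments)/2`. -/
noncomputable def sigmaL (n : ℕ) (f : ℤ → ℤ) : ℕ :=
  ((alignSet n f).ncard + {p ∈ alignSet n f | mirror n f p = p}.ncard) / 2

/-- The permutation `f` with `f(1) = n+1`, `f(2) = n+2`, `f(2s−1) = n+2s` and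
`f(2s) = n+2s−1` for `2 ≤ s ≤ n`, extended `2n`-periodically, is a ρ-symmetric
bounded affine permutation of type `(n,2n)`; exactly two indices `i ∈ {1,…,2n}`
satisfy `f i = i+n`; its alignments with `1 ≤ i ≤ 2n` are exactly the pairs
`(2s−1, 2s)` for `2 ≤ s ≤ n`, each fixed by the mirror map; and `σℓ(f) = n−1`. -/
theorem stmt16 (n : ℕ) (hn : 1 ≤ n) (f : ℤ → ℤ)
    (hf1 : f 1 = (n : ℤ) + 1) (hf2 : f 2 = (n : ℤ) + 2)
    (hodd : ∀ s : ℤ, 2 ≤ s → s ≤ (n : ℤ) → f (2 * s - 1) = (n : ℤ) + 2 * s)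
    (heven : ∀ s : ℤ, 2 ≤ s → s ≤ (n : ℤ) → f (2 * s) = (n : ℤ) + 2 * s - 1)
    (hper : ∀ i : ℤ, f (i + 2 * (n : ℤ)) = f i + 2 * (n : ℤ)) :
    Function.Bijective f ∧
    (∀ i : ℤ, i ≤ f i ∧ f i ≤ i + 2 * (n : ℤ)) ∧
    (∑ i ∈ Finset.Icc (1 : ℤ) (2 * (n : ℤ)), (f i - i) = 2 * (n : ℤ) ^ 2) ∧
    (∀ i : ℤ, f (f i - (n : ℤ)) = i + (n : ℤ)) ∧
    ((Finset.Icc (1 : ℤ) (2 * (n : ℤ))).filter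
      (fun i => f i = i + (n : ℤ))).card = 2 ∧
    (∀ p : ℤ × ℤ, p ∈ alignSet n f ↔
      ∃ s : ℤ, 2 ≤ s ∧ s ≤ (n : ℤ) ∧ p = (2 * s - 1, 2 * s)) ∧
    (∀ p ∈ alignSet n f, mirror n f p = p) ∧
    sigmaL n f = n - 1 := by
  have hn' : (1:ℤ) ≤ (n:ℤ) := by exact_mod_cast hn
  -- general periodicity
  have hperk : ∀ (k : ℤ) (i : ℤ), f (i + 2 * (n:ℤ) * k) = f i + 2 * (n:ℤ) * k := by
    intro k
    induction k using Int.induction_on with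
    | zero => intro i; simp
    | succ k ih =>
      intro i
      have h1 := hper (i + 2 * (n:ℤ) * (k:ℤ))
      have h2 := ih i
      have e1 : i + 2 * (n:ℤ) * ((k:ℤ) + 1) = i + 2 * (n:ℤ) * (k:ℤ) + 2 * (n:ℤ) := by ring
      rw [e1, h1, h2]; ring
    | pred k ih =>
      intro i
      have h1 := hper (i + 2 * (n:ℤ) * (-(k:ℤ) - 1))
      have h2 := ih i
      have e1 : i + 2 * (n:ℤ) * (-(k:ℤ) - 1) + 2 * (n:ℤ) = i + 2 * (n:ℤ) * (-(k:ℤ)) := by ring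
      rw [e1] at h1
      linarith
  -- values on the fundamental domain
  have hval : ∀ r : ℤ, 1 ≤ r → r ≤ 2 * (n:ℤ) →
      f r = r + (n:ℤ) + (if r ≤ 2 then 0 else if r % 2 = 1 then 1 else -1) := by
    intro r h1 h2
    by_cases hA : r ≤ 2
    · rw [if_pos hA]
      have : r = 1 ∨ r = 2 := by omega
      rcases this with h | h <;> subst h
      · rw [hf1]; ring
      · rw [hf2]; ring
    · rw [if_neg hA]
      by_cases hB : r % 2 = 1
      · rw [if_pos hB]
        obtain ⟨s, hs1, hs2, hs3⟩ : ∃ s : ℤ, r = 2 * s - 1 ∧ 2 ≤ s ∧ s ≤ (n:ℤ) :=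
          ⟨(r + 1) / 2, by omega, by omega, by omega⟩
        rw [hs1, hodd s hs2 hs3]; ring
      · rw [if_neg hB]
        obtain ⟨s, hs1, hs2, hs3⟩ : ∃ s : ℤ, r = 2 * s ∧ 2 ≤ s ∧ s ≤ (n:ℤ) :=
          ⟨r / 2, by omega, by omega, by omega⟩
        rw [hs1, heven s hs2 hs3]; ring
  -- values everywhere
  have hkey : ∀ i : ℤ, ∃ r k : ℤ, 1 ≤ r ∧ r ≤ 2 * (n:ℤ) ∧ i = r + 2 * (n:ℤ) * k ∧
      f i = i + (n:ℤ) + (if r ≤ 2 then 0 else if r % 2 = 1 then 1 else -1) := by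
    intro i
    have h0 : 0 ≤ (i - 1) % (2 * (n:ℤ)) := Int.emod_nonneg _ (by omega)
    have h1 : (i - 1) % (2 * (n:ℤ)) < 2 * (n:ℤ) := Int.emod_lt_of_pos _ (by omega)
    have hdm : 2 * (n:ℤ) * ((i - 1) / (2 * (n:ℤ))) + (i - 1) % (2 * (n:ℤ)) = i - 1 :=
      Int.mul_ediv_add_emod _ _
    set r := (i - 1) % (2 * (n:ℤ)) + 1 with hr
    set k := (i - 1) / (2 * (n:ℤ)) with hk
    have hi : i = r + 2 * (n:ℤ) * k := by linarith
    refine ⟨r, k, by omega, by omega, hi, ?_⟩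
    have hv := hval r (by omega) (by omega)
    rw [hi, hperk k r, hv]; ring
  -- rho symmetry
  have hrho : ∀ i : ℤ, f (f i - (n:ℤ)) = i + (n:ℤ) := by
    intro i
    obtain ⟨r, k, hr1, hr2, hi, hv⟩ := hkey i
    by_cases hA : r ≤ 2
    · rw [if_pos hA] at hv
      have e1 : f i - (n:ℤ) = r + 2 * (n:ℤ) * k := by linarith
      rw [e1, hperk k r]
      have h3 : f r = r + (n:ℤ) := by
        have hv2 := hval r hr1 hr2
        rw [if_pos hA] at hv2; linarith
      linarith
    · by_cases hB : r % 2 = 1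
      · rw [if_neg hA, if_pos hB] at hv
        have e1 : f i - (n:ℤ) = (r + 1) + 2 * (n:ℤ) * k := by linarith
        rw [e1, hperk k (r + 1)]
        have h3 : f (r + 1) = r + (n:ℤ) := by
          have hv2 := hval (r + 1) (by omega) (by omega)
          rw [if_neg (by omega : ¬ (r + 1 ≤ 2)),
            if_neg (by omega : ¬ ((r + 1) % 2 = 1))] at hv2
          linarith
        linarith
      · rw [if_neg hA, if_neg hB] at hv
        have e1 : f i - (n:ℤ) = (r - 1) + 2 * (n:ℤ) * k := by linarith
        rw [e1, hperk k (r - 1)]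
        have h3 : f (r - 1) = r + (n:ℤ) := by
          have hv2 := hval (r - 1) (by omega) (by omega)
          rw [if_neg (by omega : ¬ (r - 1 ≤ 2)),
            if_pos (by omega : (r - 1) % 2 = 1)] at hv2
          linarith
        linarith
  -- bijectivity
  have hbij : Function.Bijective f := by
    constructor
    · intro a b hab
      have h1 := hrho a
      have h2 := hrho b
      rw [hab] at h1
      linarith
    · intro j
      refine ⟨f (j - (n:ℤ)) - (n:ℤ), ?_⟩
      have := hrho (j - (n:ℤ))
      linarith
  -- bounds
  have hbnd : ∀ i : ℤ, i ≤ f i ∧ f i ≤ i + 2 * (n:ℤ) := by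
    intro i
    obtain ⟨r, k, hr1, hr2, hi, hv⟩ := hkey i
    split_ifs at hv <;> constructor <;> linarith
  -- pair sums
  have hpair : ∀ m : ℤ, 0 ≤ m → m + 1 ≤ (n:ℤ) →
      f (2 * m + 1) + f (2 * m + 2) = 4 * m + 3 + 2 * (n:ℤ) := by
    intro m h0 h1
    rcases eq_or_lt_of_le h0 with h | h
    · have hm0 : m = 0 := h.symm
      subst hm0
      norm_num
      rw [hf1, hf2]; ring
    · have ho := hodd (m + 1) (by omega) (by omega)
      have he := heven (m + 1) (by omega) (by omega)
      rw [show 2 * (m + 1) - 1 = 2 * m + 1 from by ring] at ho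
      rw [show 2 * (m + 1) = 2 * m + 2 from by ring] at he
      rw [ho, he]; ring
  have hins : ∀ a b : ℤ, a ≤ b + 1 →
      Finset.Icc a (b + 1) = insert (b + 1) (Finset.Icc a b) := by
    intro a b hab
    ext x
    simp only [Finset.mem_Icc, Finset.mem_insert]
    omega
  have hsum2 : ∀ m : ℕ, (m:ℤ) ≤ (n:ℤ) →
      ∑ i ∈ Finset.Icc (1:ℤ) (2 * (m:ℤ)), (f i - i) = 2 * (n:ℤ) * (m:ℤ) := by
    intro m
    induction m with
    | zero => intro _; simp
    | succ m ih =>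
      intro hm
      push_cast at hm
      have hm' : (m:ℤ) ≤ (n:ℤ) := by omega
      push_cast
      rw [show 2 * ((m:ℤ) + 1) = (2 * (m:ℤ) + 1) + 1 from by ring,
        hins 1 (2 * (m:ℤ) + 1) (by omega),
        Finset.sum_insert (by simp only [Finset.mem_Icc]; omega),
        hins 1 (2 * (m:ℤ)) (by omega),
        Finset.sum_insert (by simp only [Finset.mem_Icc]; omega),
        ih hm']
      rw [show (2 * (m:ℤ) + 1 + 1) = 2 * (m:ℤ) + 2 from by ring]
      have := hpair (m:ℤ) (by omega) (by omega)
      linarith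
  have hsum : ∑ i ∈ Finset.Icc (1:ℤ) (2 * (n:ℤ)), (f i - i) = 2 * (n:ℤ) ^ 2 := by
    have h := hsum2 n le_rfl
    rw [h]; ring
  -- fixed points
  have hfix : (Finset.Icc (1:ℤ) (2 * (n:ℤ))).filter (fun i => f i = i + (n:ℤ)) = {1, 2} := by
    ext i
    simp only [Finset.mem_filter, Finset.mem_Icc, Finset.mem_insert, Finset.mem_singleton]
    constructor
    · rintro ⟨⟨h1, h2⟩, h3⟩
      have hv := hval i h1 h2
      split_ifs at hv with hA hB
      · omega
      · exfalso; linarith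
      · exfalso; linarith
    · rintro (h | h) <;> subst h
      · exact ⟨⟨by omega, by omega⟩, by rw [hf1]; ring⟩
      · exact ⟨⟨by omega, by omega⟩, by rw [hf2]; ring⟩
  -- alignments
  have halign : ∀ p : ℤ × ℤ, p ∈ alignSet n f ↔
      ∃ s : ℤ, 2 ≤ s ∧ s ≤ (n:ℤ) ∧ p = (2 * s - 1, 2 * s) := by
    intro p
    obtain ⟨i, j⟩ := p
    simp only [alignSet, Set.mem_setOf_eq]
    constructor
    · rintro ⟨h1, h2, h3, h4, h5⟩
      obtain ⟨r, k, hr1, hr2, hj, hjv⟩ := hkey j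
      have hfj : j + (n:ℤ) - 1 ≤ f j := by split_ifs at hjv <;> linarith
      have hvi := hval i h1 h2
      split_ifs at hvi with hA hB
      · exfalso; linarith
      · have hji : j = i + 1 := by linarith
        refine ⟨(i + 1) / 2, by omega, by omega, ?_⟩
        rw [Prod.mk.injEq]
        constructor <;> omega
      · exfalso; linarith
    · rintro ⟨s, hs1, hs2, hp⟩
      rw [Prod.mk.injEq] at hp
      obtain ⟨hpi, hpj⟩ := hp
      have he := heven s hs1 hs2
      have ho := hodd s hs1 hs2
      refine ⟨by omega, by omega, by omega, ?_, ?_⟩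
      · rw [hpj, he]; omega
      · rw [hpi, hpj, he, ho]; omega
  -- mirror fixes alignments
  have hmir : ∀ p ∈ alignSet n f, mirror n f p = p := by
    intro p hp
    obtain ⟨s, hs1, hs2, hp'⟩ := (halign p).1 hp
    subst hp'
    have h1 : f (2 * s) = (n:ℤ) + 2 * s - 1 := heven s hs1 hs2
    have h2 : f (2 * s - 1) = (n:ℤ) + 2 * s := hodd s hs1 hs2
    have hre : mirror n f (2 * s - 1, 2 * s) =
        ((f (2 * s) + (n:ℤ) - 1) % (2 * (n:ℤ)) + 1,
         f (2 * s - 1) + (n:ℤ) +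
           (((f (2 * s) + (n:ℤ) - 1) % (2 * (n:ℤ)) + 1) - (f (2 * s) + (n:ℤ)))) := rfl
    rw [hre, h1, h2]
    have e : ((n:ℤ) + 2 * s - 1 + (n:ℤ) - 1) % (2 * (n:ℤ)) = 2 * s - 2 := by
      rw [show (n:ℤ) + 2 * s - 1 + (n:ℤ) - 1 = (2 * s - 2) + 2 * (n:ℤ) * 1 from by ring,
        Int.add_mul_emod_self_left]
      exact Int.emod_eq_of_lt (by omega) (by omega)
    rw [e, Prod.mk.injEq]
    constructor <;> ring
  -- counting
  have hset : alignSet n f = (fun s : ℤ => (2 * s - 1, 2 * s)) '' (Set.Icc 2 (n:ℤ)) := by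
    ext p
    rw [halign p]
    simp only [Set.mem_image, Set.mem_Icc]
    constructor
    · rintro ⟨s, h1, h2, h3⟩; exact ⟨s, ⟨h1, h2⟩, h3.symm⟩
    · rintro ⟨s, ⟨h1, h2⟩, h3⟩; exact ⟨s, h1, h2, h3.symm⟩
  have hcard : (alignSet n f).ncard = n - 1 := by
    rw [hset, Set.ncard_image_of_injective _ (fun a b hab => by
      simp only [Prod.mk.injEq] at hab; omega)]
    rw [show (Set.Icc 2 (n:ℤ)) = ↑(Finset.Icc 2 (n:ℤ)) from (Finset.coe_Icc _ _).symm,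
      Set.ncard_coe_finset, Int.card_Icc]
    omega
  have hsep : {p ∈ alignSet n f | mirror n f p = p} = alignSet n f := by
    ext p
    simp only [Set.mem_setOf_eq]
    exact ⟨fun h => h.1, fun h => ⟨h, hmir p h⟩⟩
  have hsig : sigmaL n f = n - 1 := by
    unfold sigmaL
    rw [hsep, hcard]
    omega
  exact ⟨hbij, hbnd, hsum, hrho, by rw [hfix]; rfl, halign, hmir, hsig⟩
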